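/- arXiv:2301.06141 — 4 statements merged into one kernel-verified Lean document; each statement's English description precedes it below -/
import Mathlib

section
/- For all x, y, z, δ in [0,1]: max(x - δ, 0) ≤ (y →G min(z + δ, 1)) if and only if min((x - z)⁺/2, (y - z)⁺) ≤ δ, where →G is the Gödel implication. -/
noncomputable def godel (x y : ℝ) : ℝ := if x ≤ y then 1 else y

noncomputable def sigmaG (x y z : ℝ) : ℝ := min (max (x - z) 0 / 2) (max (y - z) 0)

theorem stmt3 (x y z δ : ℝ) (hx : x ∈ Set.Icc (0:ℝ) 1) (hy : y ∈ Set.Icc (0:ℝ) 1)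
    (hz : z ∈ Set.Icc (0:ℝ) 1) (hδ : δ ∈ Set.Icc (0:ℝ) 1) :
    max (x - δ) 0 ≤ godel y (min (z + δ) 1) ↔ sigmaG x y z ≤ δ := by
  obtain ⟨hx0, hx1⟩ := hx; obtain ⟨hy0, hy1⟩ := hy
  obtain ⟨hz0, hz1⟩ := hz; obtain ⟨hδ0, hδ1⟩ := hδ
  unfold godel sigmaG
  split_ifs with h
  · have hyz : y ≤ z + δ := le_trans h (min_le_left _ _)
    constructor
    · intro _
      refine min_le_of_right_le ?_
      rw [max_le_iff]; constructor <;> linarith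
    · intro _
      rw [max_le_iff]; constructor <;> linarith
  · push_neg at h
    have h1 : z + δ < y := by
      rcases min_lt_iff.1 h with a | a
      · exact a
      · linarith
    constructor
    · intro hle
      have hx' : x - δ ≤ z + δ :=
        le_trans (le_max_left _ _) (le_trans hle (min_le_left _ _))
      refine min_le_of_left_le ?_
      rw [div_le_iff₀ (by norm_num), max_le_iff]
      constructor <;> linarith
    · intro hle
      have hL : max (x - z) 0 / 2 ≤ δ := by
        rcases min_le_iff.1 hle with a | a
        · exact a
        · exfalso
          have := le_trans (le_max_left (y - z) 0) a
          linarith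
      rw [div_le_iff₀ (by norm_num), max_le_iff] at hL
      rw [max_le_iff, le_min_iff]
      exact ⟨⟨by linarith [hL.1], by linarith⟩, le_min_iff.2 ⟨by linarith, by norm_num⟩⟩
end

section
/- Let A ∈ [0,1]^{n×m} and define F(c) = A ⊡ (Aᵗ ⊡_→ c). Then F is idempotent: F(F(c)) = F(c) for all c ∈ [0,1]^n. -/
noncomputable def maxMin {n m : ℕ} [NeZero m] (A : Fin n → Fin m → ℝ) (x : Fin m → ℝ) :
    Fin n → ℝ :=
  fun i => Finset.univ.sup' Finset.univ_nonempty (fun j => min (A i j) (x j))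

noncomputable def godelComp {n m : ℕ} [NeZero n] (A : Fin n → Fin m → ℝ) (c : Fin n → ℝ) :
    Fin m → ℝ :=
  fun j => Finset.univ.inf' Finset.univ_nonempty (fun i => godel (A i j) (c i))

noncomputable def Fmap {n m : ℕ} [NeZero n] [NeZero m] (A : Fin n → Fin m → ℝ)
    (c : Fin n → ℝ) : Fin n → ℝ :=
  maxMin A (godelComp A c)

lemma Fmap_le {n m : ℕ} [NeZero n] [NeZero m] (A : Fin n → Fin m → ℝ)
    (d : Fin n → ℝ) (i : Fin n) : Fmap A d i ≤ d i := by
  unfold Fmap maxMin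
  apply Finset.sup'_le
  intro j _
  have h1 : godelComp A d j ≤ godel (A i j) (d i) :=
    Finset.inf'_le _ (Finset.mem_univ i)
  unfold godel at h1
  split_ifs at h1 with h
  · exact le_trans (min_le_left _ _) h
  · exact le_trans (min_le_right _ _) h1

lemma maxMin_mono {n m : ℕ} [NeZero m] (A : Fin n → Fin m → ℝ)
    {x y : Fin m → ℝ} (h : ∀ j, x j ≤ y j) (i : Fin n) :
    maxMin A x i ≤ maxMin A y i := by
  unfold maxMin
  apply Finset.sup'_le
  intro j _
  exact le_trans (min_le_min le_rfl (h j))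
    (Finset.le_sup' (fun j => min (A i j) (y j)) (Finset.mem_univ j))

lemma le_godelComp_maxMin {n m : ℕ} [NeZero n] [NeZero m] (A : Fin n → Fin m → ℝ)
    {x : Fin m → ℝ} (hx : ∀ j, x j ≤ 1) (j : Fin m) :
    x j ≤ godelComp A (maxMin A x) j := by
  apply Finset.le_inf'
  intro i _
  unfold godel
  split_ifs with h
  · exact hx j
  · push_neg at h
    have hmem : min (A i j) (x j) ≤ maxMin A x i :=
      Finset.le_sup' (fun j => min (A i j) (x j)) (Finset.mem_univ j)
    rcases le_total (x j) (A i j) with h1 | h1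
    · rwa [min_eq_right h1] at hmem
    · rw [min_eq_left h1] at hmem; linarith

theorem stmt8 {n m : ℕ} [NeZero n] [NeZero m] (A : Fin n → Fin m → ℝ)
    (hA : ∀ i j, A i j ∈ Set.Icc (0:ℝ) 1)
    (c : Fin n → ℝ) (hc : ∀ i, c i ∈ Set.Icc (0:ℝ) 1) :
    Fmap A (Fmap A c) = Fmap A c := by
  funext i
  apply le_antisymm
  · exact Fmap_le A (Fmap A c) i
  · have hx1 : ∀ j, godelComp A c j ≤ 1 := by
      intro j
      have := Finset.inf'_le (fun i => godel (A i j) (c i))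
        (Finset.mem_univ (Classical.arbitrary (Fin n)))
      refine le_trans this ?_
      unfold godel
      split_ifs with h
      · exact le_refl 1
      · exact (hc _).2
    have h2 := le_godelComp_maxMin A hx1
    show maxMin A (godelComp A c) i ≤ maxMin A (godelComp A (maxMin A (godelComp A c))) i
    exact maxMin_mono A h2 i
end

section
/- Let A ∈ [0,1]^{n×m}, b ∈ [0,1]^n. Define Δ = min{δ ∈ [0,1] : b̲(δ) ≤ F(b̄(δ))} where F(c) = A ⊡ (Aᵗ ⊡_→ c), b̲(δ)_i = (b_i - δ)⁺, b̄(δ)_i = min(b_i + δ, 1). Then Δ = max_{1≤i≤n} min_{1≤j≤m} max( (b_i - a_{ij})⁺, max_{1≤k≤n} σ_G(b_i, a_{kj}, b_k) ), where σ_G(x, y, z) = min((x - z)⁺/2, (y - z)⁺). -/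
noncomputable def chebNorm {n : ℕ} [NeZero n] (b c : Fin n → ℝ) : ℝ :=
  Finset.univ.sup' Finset.univ_nonempty (fun i => |b i - c i|)

lemma godel_nonneg {x y : ℝ} (hy : 0 ≤ y) : 0 ≤ godel x y := by
  unfold godel; split <;> [norm_num; exact hy]

lemma godel_iff {x y z δ : ℝ} (hx1 : x ≤ 1) (hy1 : y ≤ 1)
    (hδ0 : 0 ≤ δ) :
    x - δ ≤ godel y (min (z + δ) 1) ↔ sigmaG x y z ≤ δ := by
  unfold godel sigmaG
  by_cases h : y ≤ min (z + δ) 1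
  · have h1 : y - z ≤ δ := by
      have := le_min_iff.mp h
      linarith [this.1]
    simp only [h, if_pos]
    constructor
    · intro _; exact le_trans (min_le_right _ _) (by simp [max_le_iff]; constructor <;> linarith)
    · intro _; linarith
  · have h2 : min (z + δ) 1 < y := lt_of_not_ge h
    have h3 : z + δ < 1 := by
      rcases min_cases (z + δ) 1 with ⟨he, hle⟩ | ⟨he, hlt⟩
      · rcases lt_or_ge (z + δ) 1 with h | h
        · exact h
        · linarith [he ▸ h2]
      · linarith [he ▸ h2]
    have hmin : min (z + δ) 1 = z + δ := min_eq_left h3.le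
    rw [if_neg h, hmin]
    have hyz : δ < y - z := by rw [hmin] at h2; linarith
    constructor
    · intro hle
      refine le_trans (min_le_left _ _) ?_
      rw [div_le_iff₀ (by norm_num : (0:ℝ) < 2)]
      simp only [max_le_iff]
      constructor <;> linarith
    · intro hle
      rcases min_le_iff.mp hle with h4 | h4
      · rw [div_le_iff₀ (by norm_num : (0:ℝ) < 2)] at h4
        have := le_of_max_le_left h4
        linarith
      · exact absurd (le_trans (le_max_left (y - z) 0) h4) (not_le.mpr hyz)

theorem stmt11 {n m : ℕ} [NeZero n] [NeZero m] (A : Fin n → Fin m → ℝ)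
    (hA : ∀ i j, A i j ∈ Set.Icc (0:ℝ) 1)
    (b : Fin n → ℝ) (hb : ∀ i, b i ∈ Set.Icc (0:ℝ) 1) :
    sInf {δ : ℝ | δ ∈ Set.Icc (0:ℝ) 1 ∧
        ∀ i, max (b i - δ) 0 ≤ Fmap A (fun k => min (b k + δ) 1) i} =
      Finset.univ.sup' Finset.univ_nonempty (fun i =>
        Finset.univ.inf' Finset.univ_nonempty (fun j =>
          max (max (b i - A i j) 0)
            (Finset.univ.sup' Finset.univ_nonempty (fun k => sigmaG (b i) (A k j) (b k))))) := by
  set Δ := Finset.univ.sup' Finset.univ_nonempty (fun i =>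
        Finset.univ.inf' Finset.univ_nonempty (fun j =>
          max (max (b i - A i j) 0)
            (Finset.univ.sup' Finset.univ_nonempty (fun k => sigmaG (b i) (A k j) (b k))))) with hΔdef
  have i0 : Fin n := Classical.arbitrary _
  have j0 : Fin m := Classical.arbitrary _
  have hΔ0 : 0 ≤ Δ := by
    refine le_trans ?_ (Finset.le_sup' _ (Finset.mem_univ i0))
    apply Finset.le_inf'
    intro j _
    exact le_trans (le_max_right _ 0) (le_max_left _ _)
  have hΔ1 : Δ ≤ 1 := by
    apply Finset.sup'_le
    intro i _
    refine Finset.inf'_le_of_le _ (Finset.mem_univ j0) ?_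
    apply max_le
    · apply max_le
      · linarith [(hb i).2, (hA i j0).1]
      · norm_num
    · apply Finset.sup'_le
      intro k _
      unfold sigmaG
      refine le_trans (min_le_right _ _) ?_
      apply max_le
      · linarith [(hA k j0).2, (hb k).1]
      · norm_num
  have hiff : ∀ δ : ℝ, δ ∈ Set.Icc (0:ℝ) 1 →
      ((∀ i, max (b i - δ) 0 ≤ Fmap A (fun k => min (b k + δ) 1) i) ↔ Δ ≤ δ) := by
    intro δ hδ
    obtain ⟨hδ0, hδ1⟩ := hδ
    rw [hΔdef, Finset.sup'_le_iff]
    have hg0 : ∀ j, 0 ≤ godelComp A (fun k => min (b k + δ) 1) j := by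
      intro j
      apply Finset.le_inf'
      intro k _
      apply godel_nonneg
      exact le_min (by linarith [(hb k).1]) (by norm_num)
    constructor
    · intro h i _
      have hi := h i
      unfold Fmap maxMin at hi
      have hi' : b i - δ ≤ Finset.univ.sup' Finset.univ_nonempty
          (fun j => min (A i j) (godelComp A (fun k => min (b k + δ) 1) j)) :=
        le_trans (le_max_left _ _) hi
      rw [Finset.le_sup'_iff] at hi'
      obtain ⟨j, _, hj⟩ := hi'
      rw [le_min_iff] at hj
      refine Finset.inf'_le_of_le _ (Finset.mem_univ j) ?_
      apply max_le
      · apply max_le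
        · linarith [hj.1]
        · exact hδ0
      · apply Finset.sup'_le
        intro k _
        have hk : b i - δ ≤ godel (A k j) (min (b k + δ) 1) :=
          le_trans hj.2 (Finset.inf'_le
            (fun i => godel (A i j) (min (b i + δ) 1)) (Finset.mem_univ k))
        exact (godel_iff (hb i).2 (hA k j).2 hδ0).mp hk
    · intro h i
      have hi := h i (Finset.mem_univ i)
      rw [Finset.inf'_le_iff] at hi
      obtain ⟨j, _, hj⟩ := hi
      rw [max_le_iff, max_le_iff] at hj
      obtain ⟨⟨h1, _⟩, h2⟩ := hj
      unfold Fmap maxMin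
      apply max_le
      · refine le_trans ?_ (Finset.le_sup' _ (Finset.mem_univ j))
        apply le_min
        · linarith
        · apply Finset.le_inf'
          intro k _
          refine (godel_iff (hb i).2 (hA k j).2 hδ0).mpr ?_
          exact le_trans (Finset.le_sup'
            (fun k => sigmaG (b i) (A k j) (b k)) (Finset.mem_univ k)) h2
      · refine le_trans ?_ (Finset.le_sup' _ (Finset.mem_univ j))
        exact le_min (hA i j).1 (hg0 j)
  have hset : {δ : ℝ | δ ∈ Set.Icc (0:ℝ) 1 ∧
        ∀ i, max (b i - δ) 0 ≤ Fmap A (fun k => min (b k + δ) 1) i} = Set.Icc Δ 1 := by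
    ext δ
    simp only [Set.mem_setOf_eq, Set.mem_Icc]
    constructor
    · rintro ⟨hmem, hP⟩
      exact ⟨(hiff δ hmem).mp hP, hmem.2⟩
    · rintro ⟨h1, h2⟩
      have hmem : δ ∈ Set.Icc (0:ℝ) 1 := ⟨le_trans hΔ0 h1, h2⟩
      exact ⟨hmem, (hiff δ hmem).mpr h1⟩
  rw [hset, csInf_Icc hΔ1]
end

section
/- Let A ∈ [0,1]^{n×m}, b ∈ [0,1]^n, Δ ∈ [0,1]. For j = 1,…,m let H_j = {i : a_{ij} < b_i - Δ}, and for T ⊆ {1,…,m} let I_T = ∩_{j∈T} H_j and ξ_T = max_{i ∈ I_T} (b_i - Δ)⁺ (with max over ∅ equal to 0). For x ∈ [0,1]^m, the following are equivalent: (i) b̲(Δ) ≤ A ⊡ x componentwise; (ii) for every i there exists j with (b_i - Δ)⁺ ≤ a_{ij} and (b_i - Δ)⁺ ≤ x_j; (iii) for every subset T of {1,…,m}, ξ_T ≤ max_{j ∈ Tᶜ} x_j (with max over ∅ equal to 0). -/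
open scoped Classical

noncomputable def xiT {n m : ℕ} (A : Fin n → Fin m → ℝ) (b : Fin n → ℝ) (Δ : ℝ)
    (T : Finset (Fin m)) : ℝ :=
  if h : (Finset.univ.filter (fun i : Fin n => ∀ j ∈ T, A i j < b i - Δ)).Nonempty then
    (Finset.univ.filter (fun i : Fin n => ∀ j ∈ T, A i j < b i - Δ)).sup' h
      (fun i => max (b i - Δ) 0)
  else 0

noncomputable def stmtMaxOn {m : ℕ} (S : Finset (Fin m)) (x : Fin m → ℝ) : ℝ :=
  if h : S.Nonempty then S.sup' h x else 0

theorem stmt16 {n m : ℕ} [NeZero m] (A : Fin n → Fin m → ℝ)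
    (hA : ∀ i j, A i j ∈ Set.Icc (0:ℝ) 1)
    (b : Fin n → ℝ) (hb : ∀ i, b i ∈ Set.Icc (0:ℝ) 1)
    (Δ : ℝ) (hΔ : Δ ∈ Set.Icc (0:ℝ) 1)
    (x : Fin m → ℝ) (hx : ∀ j, x j ∈ Set.Icc (0:ℝ) 1) :
    ((∀ i, max (b i - Δ) 0 ≤
        Finset.univ.sup' Finset.univ_nonempty (fun j => min (A i j) (x j))) ↔
      (∀ i, ∃ j, max (b i - Δ) 0 ≤ A i j ∧ max (b i - Δ) 0 ≤ x j)) ∧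
    ((∀ i, max (b i - Δ) 0 ≤
        Finset.univ.sup' Finset.univ_nonempty (fun j => min (A i j) (x j))) ↔
      (∀ T : Finset (Fin m), xiT A b Δ T ≤ stmtMaxOn Tᶜ x)) := by
  have h1 : (∀ i, max (b i - Δ) 0 ≤
        Finset.univ.sup' Finset.univ_nonempty (fun j => min (A i j) (x j))) ↔
      (∀ i, ∃ j, max (b i - Δ) 0 ≤ A i j ∧ max (b i - Δ) 0 ≤ x j) := by
    constructor
    · intro h i
      obtain ⟨j, _, hj⟩ := (Finset.le_sup'_iff _).mp (h i)
      exact ⟨j, (le_min_iff.mp hj).1, (le_min_iff.mp hj).2⟩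
    · intro h i
      obtain ⟨j, hj1, hj2⟩ := h i
      exact (Finset.le_sup'_iff _).mpr ⟨j, Finset.mem_univ j, le_min hj1 hj2⟩
  refine ⟨h1, h1.trans ?_⟩
  constructor
  · intro h T
    unfold xiT stmtMaxOn
    split_ifs with h1' h2 h2
    · apply Finset.sup'_le
      intro i hi
      rw [Finset.mem_filter] at hi
      obtain ⟨j, hj1, hj2⟩ := h i
      have hjc : j ∈ Tᶜ := by
        rw [Finset.mem_compl]
        intro hjT
        have h3 := hi.2 j hjT
        have h4 : A i j < max (b i - Δ) 0 := lt_of_lt_of_le h3 (le_max_left _ _)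
        linarith
      exact le_trans hj2 (Finset.le_sup' x hjc)
    · apply Finset.sup'_le
      intro i hi
      rw [Finset.mem_filter] at hi
      obtain ⟨j, hj1, hj2⟩ := h i
      have hjc : j ∈ Tᶜ := by
        rw [Finset.mem_compl]
        intro hjT
        have h3 := hi.2 j hjT
        have h4 : A i j < max (b i - Δ) 0 := lt_of_lt_of_le h3 (le_max_left _ _)
        linarith
      exact absurd ⟨j, hjc⟩ h2
    · obtain ⟨j, hj⟩ := h2
      exact le_trans (hx j).1 (Finset.le_sup' x hj)
    · exact le_refl 0
  · intro h i
    by_cases hbi : b i - Δ ≤ 0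
    · obtain ⟨j⟩ := Fin.pos_iff_nonempty.mp (NeZero.pos m)
      refine ⟨j, ?_, ?_⟩ <;> simp [max_eq_right hbi, (hA i j).1, (hx j).1]
    · push_neg at hbi
      have hmax : max (b i - Δ) 0 = b i - Δ := max_eq_left hbi.le
      by_contra hcon
      push_neg at hcon
      set T : Finset (Fin m) := Finset.univ.filter (fun j => A i j < b i - Δ) with hT
      have hiset : i ∈ Finset.univ.filter (fun i' : Fin n => ∀ j ∈ T, A i' j < b i' - Δ) := by
        simp [hT, Finset.mem_filter]
      have hxi : b i - Δ ≤ xiT A b Δ T := by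
        unfold xiT
        rw [dif_pos ⟨i, hiset⟩]
        calc b i - Δ ≤ max (b i - Δ) 0 := le_max_left _ _
          _ ≤ _ := Finset.le_sup' (fun i => max (b i - Δ) 0) hiset
      have hmx : stmtMaxOn Tᶜ x < b i - Δ := by
        unfold stmtMaxOn
        split_ifs with h2
        · rw [Finset.sup'_lt_iff]
          intro j hj
          rw [Finset.mem_compl, hT, Finset.mem_filter] at hj
          have hAij : ¬ A i j < b i - Δ := fun hc => hj ⟨Finset.mem_univ j, hc⟩
          have h5 := hcon j
          rw [hmax] at h5
          exact h5 (not_lt.mp hAij)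
        · exact hbi
      have := h T
      linarith
end
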